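/- In an image-finite LTS with reflexive silent steps, if p is directed branching apart from q then there exists a PHMLU formula φ with p ⊨ φ and q ⊭ φ. -/

import Mathlib

variable {X A : Type*}

/-- Formulas of Hennessy-Milner Logic with Until. `none` is the silent action τ. -/
inductive HMLU (A : Type*) where
  | top : HMLU A
  | neg : HMLU A → HMLU A
  | and : HMLU A → HMLU A → HMLU A
  | dia : HMLU A → Option A → HMLU A → HMLU A

/-- Satisfaction: `p ⊨ δ⟨α⟩ψ` iff there is a τ-path from `p` along which every state
satisfies `δ`, ending in a state that `α`-steps to a state satisfying `ψ`. -/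
def Sat (step : Option A → X → X → Prop) : HMLU A → X → Prop
  | .top, _ => True
  | .neg φ, p => ¬ Sat step φ p
  | .and φ ψ, p => Sat step φ p ∧ Sat step ψ p
  | .dia δ α ψ, p => ∃ p' p'', Sat step δ p ∧
      Relation.ReflTransGen (fun x y => step none x y ∧ Sat step δ y) p p' ∧
      step α p' p'' ∧ Sat step ψ p''

mutual
  /-- Positive HMLU formulas. -/
  inductive Positive : HMLU A → Prop
    | top : Positive .top
    | neg {φ : HMLU A} : Negative φ → Positive (.neg φ)
    | and {φ ψ : HMLU A} : Positive φ → Positive ψ → Positive (.and φ ψ)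
    | dia {δ ψ : HMLU A} {α : Option A} : Positive δ → Positive (.dia δ α ψ)
  /-- Negative HMLU formulas. -/
  inductive Negative : HMLU A → Prop
    | top : Negative .top
    | neg {φ : HMLU A} : Positive φ → Negative (.neg φ)
    | and {φ ψ : HMLU A} : Negative φ → Negative ψ → Negative (.and φ ψ)
end

/-- Good formulas: every diamond subformula has a positive left-hand side. -/
inductive Good : HMLU A → Prop
  | top : Good .top
  | neg {φ : HMLU A} : Good φ → Good (.neg φ)
  | and {φ ψ : HMLU A} : Good φ → Good ψ → Good (.and φ ψ)
  | dia {δ ψ : HMLU A} {α : Option A} : Positive δ → Good δ → Good ψ → Good (.dia δ α ψ)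

/-- Formulas of Positive Hennessy-Milner Logic with Until. -/
inductive PHMLU (A : Type*) where
  | top : PHMLU A
  | bot : PHMLU A
  | and : PHMLU A → PHMLU A → PHMLU A
  | or : PHMLU A → PHMLU A → PHMLU A
  | dia : PHMLU A → Option A → PHMLU A → PHMLU A → PHMLU A

/-- The embedding of PHMLU into HMLU (`⊥ := ¬⊤`, `∨` by De Morgan,
`δ⟨α⟩(ψ⁺ ∧ ¬ψ⁻)` as a diamond with a conjunction on the right). -/
def PHMLU.toHMLU : PHMLU A → HMLU A
  | .top => .top
  | .bot => .neg .top
  | .and φ ψ => .and φ.toHMLU ψ.toHMLU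
  | .or φ ψ => .neg (.and (.neg φ.toHMLU) (.neg ψ.toHMLU))
  | .dia δ α ψp ψn => .dia δ.toHMLU α (.and ψp.toHMLU (.neg ψn.toHMLU))

/-- `Q` is a directed branching apartness relation. -/
def IsDBApartRel (step : Option A → X → X → Prop) (Q : X → X → Prop) : Prop :=
  ∀ (α : Option A) (p p' q : X), step α p p' →
    (∀ q' q'', Relation.ReflTransGen (step none) q q' → step α q' q'' →
      Q p q' ∨ Q p' q'' ∨ Q q'' p') → Q p q

/-- Directed branching apartness: the least directed branching apartness relation. -/
def DBApart (step : Option A → X → X → Prop) (p q : X) : Prop :=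
  ∀ Q : X → X → Prop, IsDBApartRel step Q → Q p q

/-- Finite conjunction of PHMLU formulas. -/
def PHMLU.bigAnd : List (PHMLU A) → PHMLU A
  | [] => .top
  | φ :: l => .and φ (bigAnd l)

/-- Finite disjunction of PHMLU formulas. -/
def PHMLU.bigOr : List (PHMLU A) → PHMLU A
  | [] => .bot
  | φ :: l => .or φ (bigOr l)

lemma sat_bigAnd (step : Option A → X → X → Prop) (l : List (PHMLU A)) (x : X) :
    Sat step (PHMLU.bigAnd l).toHMLU x ↔ ∀ φ ∈ l, Sat step φ.toHMLU x := by
  induction l with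
  | nil => simp [PHMLU.bigAnd, PHMLU.toHMLU, Sat]
  | cons a l ih => simp [PHMLU.bigAnd, PHMLU.toHMLU, Sat, ih]

lemma sat_bigOr (step : Option A → X → X → Prop) (l : List (PHMLU A)) (x : X) :
    Sat step (PHMLU.bigOr l).toHMLU x ↔ ∃ φ ∈ l, Sat step φ.toHMLU x := by
  induction l with
  | nil => simp [PHMLU.bigOr, PHMLU.toHMLU, Sat]
  | cons a l ih =>
    show ¬(¬ Sat step a.toHMLU x ∧ ¬ Sat step (PHMLU.bigOr l).toHMLU x) ↔ _
    rw [ih]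
    rw [not_and_or, not_not, not_not]
    simp only [List.mem_cons]
    constructor
    · rintro (h1 | ⟨φ, hm, hs⟩)
      · exact ⟨a, Or.inl rfl, h1⟩
      · exact ⟨φ, Or.inr hm, hs⟩
    · rintro ⟨φ, hm | hm, hs⟩
      · exact Or.inl (hm ▸ hs)
      · exact Or.inr ⟨φ, hm, hs⟩

/-- `a` is distinguishable from `b` by a PHMLU formula. -/
def PDist (step : Option A → X → X → Prop) (a b : X) : Prop :=
  ∃ φ : PHMLU A, Sat step φ.toHMLU a ∧ ¬ Sat step φ.toHMLU b

open Classical in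
/-- A formula witnessing `PDist step a b`, with default `⊤`. -/
noncomputable def distT (step : Option A → X → X → Prop) (a b : X) : PHMLU A :=
  if h : PDist step a b then Classical.choose h else .top

open Classical in
/-- A formula witnessing `PDist step a b`, with default `⊥`. -/
noncomputable def distB (step : Option A → X → X → Prop) (a b : X) : PHMLU A :=
  if h : PDist step a b then Classical.choose h else .bot

lemma distT_sat {step : Option A → X → X → Prop} {a : X} (b : X) :
    Sat step (distT step a b).toHMLU a := by
  unfold distT
  split
  · exact (Classical.choose_spec (by assumption : PDist step a b)).1
  · trivial

lemma distT_nsat {step : Option A → X → X → Prop} {a b : X} (h : PDist step a b) :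
    ¬ Sat step (distT step a b).toHMLU b := by
  unfold distT
  rw [dif_pos h]
  exact (Classical.choose_spec h).2

lemma distB_sat {step : Option A → X → X → Prop} {a b : X} (h : PDist step a b) :
    Sat step (distB step a b).toHMLU a := by
  unfold distB
  rw [dif_pos h]
  exact (Classical.choose_spec h).1

lemma distB_nsat {step : Option A → X → X → Prop} {a : X} (b : X) :
    ¬ Sat step (distB step a b).toHMLU b := by
  unfold distB
  split
  · exact (Classical.choose_spec (by assumption : PDist step a b)).2
  · simp [PHMLU.toHMLU, Sat]

lemma dist_isDBApartRel (step : Option A → X → X → Prop)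
    (hfin : ∀ (α : Option A) (q : X),
      {x : X × X | Relation.ReflTransGen (step none) q x.1 ∧ step α x.1 x.2}.Finite) :
    IsDBApartRel step (PDist step) := by
  intro α p p' q hstep hall
  set S := (hfin α q).toFinset with hS
  let f1 : X × X → PHMLU A := fun x => distT step p x.1
  let f2 : X × X → PHMLU A := fun x => distT step p' x.2
  let f3 : X × X → PHMLU A := fun x => distB step x.2 p'
  refine ⟨.dia (.bigAnd (S.toList.map f1)) α (.bigAnd (S.toList.map f2))
      (.bigOr (S.toList.map f3)), ?_, ?_⟩
  · -- p satisfies the formula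
    have hδp : Sat step (PHMLU.bigAnd (S.toList.map f1)).toHMLU p := by
      rw [sat_bigAnd]
      rintro φ hφ
      obtain ⟨x, -, rfl⟩ := List.mem_map.mp hφ
      exact distT_sat _
    refine ⟨p, p', hδp, Relation.ReflTransGen.refl, hstep, ?_, ?_⟩
    · rw [sat_bigAnd]
      rintro φ hφ
      obtain ⟨x, -, rfl⟩ := List.mem_map.mp hφ
      exact distT_sat _
    · show ¬ Sat step (PHMLU.bigOr (S.toList.map f3)).toHMLU p'
      rw [sat_bigOr]
      rintro ⟨φ, hφ, hsat⟩
      obtain ⟨x, -, rfl⟩ := List.mem_map.mp hφ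
      exact distB_nsat _ hsat
  · -- q does not satisfy the formula
    rintro ⟨q', q'', hδq, hpath, hstepq, hsp, hsn⟩
    have hrtg : Relation.ReflTransGen (step none) q q' :=
      Relation.ReflTransGen.mono (fun x y (hxy : step none x y ∧ _) => hxy.1) q q' hpath
    have hmem : (q', q'') ∈ S := by
      rw [hS, Set.Finite.mem_toFinset]; exact ⟨hrtg, hstepq⟩
    have hδq' : Sat step (PHMLU.bigAnd (S.toList.map f1)).toHMLU q' := by
      rcases hpath.cases_tail with heq | ⟨c, -, hc⟩
      · exact heq ▸ hδq
      · exact hc.2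
    rcases hall q' q'' hrtg hstepq with hc | hc | hc
    · have := (sat_bigAnd step _ q').mp hδq' (f1 (q', q''))
        (List.mem_map_of_mem (f := f1) (Finset.mem_toList.mpr hmem))
      exact distT_nsat hc this
    · have := (sat_bigAnd step _ q'').mp hsp (f2 (q', q''))
        (List.mem_map_of_mem (f := f2) (Finset.mem_toList.mpr hmem))
      exact distT_nsat hc this
    · exact hsn ((sat_bigOr step _ q'').mpr ⟨f3 (q', q''),
        List.mem_map_of_mem (f := f3) (Finset.mem_toList.mpr hmem), distB_sat hc⟩)

theorem dbApart_gives_distinguishing_phmlu (step : Option A → X → X → Prop)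
    (htau : ∀ p : X, step none p p)
    (hfin : ∀ (α : Option A) (q : X),
      {x : X × X | Relation.ReflTransGen (step none) q x.1 ∧ step α x.1 x.2}.Finite)
    (hfin' : ∀ (α : Option A) (q : X), {q' : X | step α q q'}.Finite)
    (p q : X) (h : DBApart step p q) :
    ∃ φ : PHMLU A, Sat step φ.toHMLU p ∧ ¬ Sat step φ.toHMLU q := by
  exact h (PDist step) (dist_isDBApartRel step hfin)
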